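/- arXiv:2104.13145 — 2 statements merged into one kernel-verified Lean document; each statement's English description precedes it below -/
import Mathlib

section
/- (Combes–Thomas estimate for long-range operators) Let H = A + V on ℓ²(ℤ) where (Au)_n = Σ_k a_{n-k}u_k with |a_k| ≤ A₁e^{-a|k|} (a, A₁ > 0, a_{-k} = conj(a_k)) and V a bounded real potential. Let z ∈ ℂ with η = dist(z, σ(H)) ≥ 1. Then there exist C, c > 0 depending only on A₁, a, ‖V‖_∞ such that |((H − z)⁻¹δ_j, δ_n)| ≤ C e^{-c|n − j|} for all j, n ∈ ℤ. -/
open scoped InnerProductSpace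
open scoped ENNReal NNReal

set_option maxHeartbeats 1000000

noncomputable section

abbrev L2 := lp (fun _ : ℤ => ℂ) 2

def dl (n : ℤ) : L2 := lp.single 2 n (1 : ℂ)

namespace CT6

lemma summable_exp_int {b : ℝ} (hb : 0 < b) :
    Summable (fun m : ℤ => Real.exp (-b * |(m:ℝ)|)) := by
  have hr : |Real.exp (-b)| < 1 := by
    rw [abs_of_pos (Real.exp_pos _)]
    exact Real.exp_lt_one_iff.2 (by linarith)
  have hnat : Summable (fun n : ℕ => Real.exp (-b * (n:ℝ))) := by
    have := summable_geometric_of_abs_lt_one hr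
    refine this.congr fun n => ?_
    rw [← Real.exp_nat_mul]; ring_nf
  apply Summable.of_nat_of_neg <;>
    · refine hnat.congr fun n => ?_
      push_cast
      simp [abs_of_nonneg, Nat.cast_nonneg]

lemma summable_mul_exp_int {b : ℝ} (hb : 0 < b) :
    Summable (fun m : ℤ => |(m:ℝ)| * Real.exp (-b * |(m:ℝ)|)) := by
  have hr : |Real.exp (-b)| < 1 := by
    rw [abs_of_pos (Real.exp_pos _)]
    exact Real.exp_lt_one_iff.2 (by linarith)
  have hnat : Summable (fun n : ℕ => (n:ℝ) * Real.exp (-b * (n:ℝ))) := by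
    have := summable_pow_mul_geometric_of_norm_lt_one (R := ℝ) 1 hr
    refine this.congr fun n => ?_
    rw [← Real.exp_nat_mul]
    ring_nf
  apply Summable.of_nat_of_neg <;>
    · refine hnat.congr fun n => ?_
      push_cast
      simp [abs_of_nonneg, Nat.cast_nonneg]



lemma memℓp_wshift (d : ℤ → ℂ) (m : ℤ) (M : ℝ) (hd : ∀ n, ‖d n‖ ≤ M) (u : L2) :
    Memℓp (fun n : ℤ => d n * u (n - m)) 2 := by
  have hM : 0 ≤ M := le_trans (norm_nonneg _) (hd 0)
  apply memℓp_gen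
  have h2 : (2:ℝ≥0∞).toReal = 2 := by norm_num
  rw [h2]
  have hu : Summable (fun n : ℤ => ‖u (n - m)‖ ^ (2:ℝ)) := by
    have := ((lp.memℓp u).summable (by norm_num : 0 < (2:ℝ≥0∞).toReal))
    rw [h2] at this
    exact ((Equiv.subRight m).summable_iff).2 this
  refine Summable.of_nonneg_of_le (fun n => by positivity) (fun n => ?_)
    (hu.mul_left (M ^ (2:ℝ)))
  calc ‖d n * u (n - m)‖ ^ (2:ℝ) ≤ (M * ‖u (n - m)‖) ^ (2:ℝ) := by
        apply Real.rpow_le_rpow (norm_nonneg _) _ (by norm_num)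
        rw [norm_mul]
        exact mul_le_mul_of_nonneg_right (hd n) (norm_nonneg _)
    _ = M ^ (2:ℝ) * ‖u (n - m)‖ ^ (2:ℝ) := Real.mul_rpow hM (norm_nonneg _)

/-- weighted shift operator `(u n) ↦ d n * u (n - m)` -/
def wshift (d : ℤ → ℂ) (m : ℤ) (M : ℝ) (hd : ∀ n, ‖d n‖ ≤ M) : L2 →L[ℂ] L2 :=
  LinearMap.mkContinuous
    { toFun := fun u => ⟨fun n => d n * u (n - m), memℓp_wshift d m M hd u⟩
      map_add' := fun u v => by
        ext n
        simp only [lp.coeFn_add, Pi.add_apply]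
        change d n * (u (n-m) + v (n-m)) = d n * u (n-m) + d n * v (n-m)
        ring
      map_smul' := fun c u => by
        ext n
        simp only [lp.coeFn_smul, Pi.smul_apply, RingHom.id_apply, smul_eq_mul]
        change d n * (c * u (n-m)) = c * (d n * u (n-m))
        ring }
    M
    (fun u => by
      have hM : 0 ≤ M := le_trans (norm_nonneg _) (hd 0)
      have h2 : (0:ℝ) < (2:ℝ≥0∞).toReal := by norm_num
      refine lp.norm_le_of_forall_sum_le h2 (by positivity) ?_
      intro s
      have h2' : (2:ℝ≥0∞).toReal = 2 := by norm_num
      calc ∑ i ∈ s, ‖d i * u (i - m)‖ ^ (2:ℝ≥0∞).toReal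
          ≤ ∑ i ∈ s, M ^ (2:ℝ) * ‖u (i - m)‖ ^ (2:ℝ) := by
            apply Finset.sum_le_sum
            intro i _
            rw [h2', ← Real.mul_rpow hM (norm_nonneg _)]
            apply Real.rpow_le_rpow (norm_nonneg _) _ (by norm_num)
            rw [norm_mul]
            exact mul_le_mul_of_nonneg_right (hd i) (norm_nonneg _)
        _ = M ^ (2:ℝ) * ∑ i ∈ s.map (Equiv.subRight m).toEmbedding, ‖u i‖ ^ (2:ℝ) := by
            rw [← Finset.mul_sum, Finset.sum_map]
            simp [Equiv.subRight]
        _ ≤ M ^ (2:ℝ) * ‖u‖ ^ (2:ℝ) := by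
            apply mul_le_mul_of_nonneg_left _ (by positivity)
            have := lp.sum_rpow_le_norm_rpow h2 u (s.map (Equiv.subRight m).toEmbedding)
            rwa [h2'] at this
        _ = (M * ‖u‖) ^ (2:ℝ≥0∞).toReal := by
            rw [h2', Real.mul_rpow hM (lp.norm_nonneg' u)])

@[simp] lemma wshift_apply (d : ℤ → ℂ) (m : ℤ) (M : ℝ) (hd : ∀ n, ‖d n‖ ≤ M) (u : L2) (n : ℤ) :
    (wshift d m M hd u) n = d n * u (n - m) := rfl

/-- evaluation functional -/
def evalCLM (n : ℤ) : L2 →L[ℂ] ℂ :=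
  LinearMap.mkContinuous
    { toFun := fun u => u n
      map_add' := fun u v => by simp [lp.coeFn_add]
      map_smul' := fun c u => by simp [lp.coeFn_smul] }
    1
    (fun u => by change ‖u n‖ ≤ 1 * ‖u‖; simpa using lp.norm_apply_le_norm (by norm_num) u n)

lemma tsum_apply_eq {F : ℤ → L2} (h : Summable F) (n : ℤ) :
    (∑' m, F m) n = ∑' m, (F m) n :=
  (evalCLM n).map_tsum h

end CT6

namespace CT6

lemma wshift_norm_le (d : ℤ → ℂ) (m : ℤ) (M : ℝ) (hd : ∀ n, ‖d n‖ ≤ M) :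
    ‖wshift d m M hd‖ ≤ M :=
  LinearMap.mkContinuous_norm_le _ (le_trans (norm_nonneg _) (hd 0)) _

/-- the shift operator -/
def S (m : ℤ) : L2 →L[ℂ] L2 := wshift (fun _ => 1) m 1 (fun _ => by norm_num)

lemma S_apply (m : ℤ) (u : L2) (n : ℤ) : S m u n = u (n - m) := by
  change (1:ℂ) * u (n - m) = u (n - m); ring

lemma S_norm_le (m : ℤ) (u : L2) : ‖S m u‖ ≤ ‖u‖ := by
  calc ‖S m u‖ ≤ ‖S m‖ * ‖u‖ := (S m).le_opNorm u
    _ ≤ 1 * ‖u‖ := mul_le_mul_of_nonneg_right (wshift_norm_le _ _ _ _) (norm_nonneg _)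
    _ = ‖u‖ := one_mul _

end CT6

namespace CT6

variable {A₁ α : ℝ} {a : ℤ → ℂ}

lemma summable_aS (hα : 0 < α)
    (ha : ∀ k, ‖a k‖ ≤ A₁ * Real.exp (-α * |(k:ℝ)|)) (u : L2) :
    Summable (fun m : ℤ => a m • S m u) := by
  refine Summable.of_norm_bounded (g := fun m => A₁ * Real.exp (-α * |(m:ℝ)|) * ‖u‖)
    (((summable_exp_int hα).mul_left A₁).mul_right ‖u‖) (fun m => ?_)
  rw [norm_smul]
  exact mul_le_mul (ha m) (S_norm_le m u) (norm_nonneg _)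
    (le_trans (norm_nonneg (a m)) (ha m))

lemma rep (hα : 0 < α) (ha : ∀ k, ‖a k‖ ≤ A₁ * Real.exp (-α * |(k:ℝ)|))
    {Vb : ℝ} (V : ℤ → ℝ) (hV : ∀ n, ‖((V n : ℝ) : ℂ)‖ ≤ Vb)
    (H : L2 →L[ℂ] L2)
    (hH : ∀ (u : L2) (n : ℤ), (H u) n = (∑' k : ℤ, a (n - k) * u k) + (V n : ℂ) * u n)
    (u : L2) :
    H u = (∑' m : ℤ, a m • S m u) + wshift (fun n => (V n : ℂ)) 0 Vb hV u := by
  apply lp.ext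
  funext n
  rw [lp.coeFn_add, Pi.add_apply, hH u n, tsum_apply_eq (summable_aS hα ha u) n]
  have h1 : ∀ m : ℤ, (a m • S m u) n = a m * u (n - m) := fun m => by
    rw [lp.coeFn_smul, Pi.smul_apply, smul_eq_mul, S_apply]
  congr 1
  · calc ∑' k : ℤ, a (n - k) * u k = ∑' m : ℤ, a m * u (n - m) := by
          rw [← (Equiv.subLeft n).tsum_eq (fun m => a m * u (n - m))]
          exact tsum_congr fun k => by simp [Equiv.subLeft, sub_sub_cancel]
      _ = ∑' m : ℤ, (a m • S m u) n := (tsum_congr h1).symm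
  · change (V n : ℂ) * u n = (V n : ℂ) * u (n - 0)
    rw [sub_zero]

end CT6

namespace CT6

variable {A₁ α : ℝ} {a : ℤ → ℂ}

lemma inner_S (m : ℤ) (u v : L2) : ⟪S m u, v⟫_ℂ = ⟪u, S (-m) v⟫_ℂ := by
  rw [lp.inner_eq_tsum, lp.inner_eq_tsum]
  calc ∑' n : ℤ, ⟪(S m u) n, v n⟫_ℂ
      = ∑' k : ℤ, ⟪u k, v (k + m)⟫_ℂ := by
        rw [← (Equiv.addRight m).tsum_eq (fun n : ℤ => ⟪(S m u) n, v n⟫_ℂ)]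
        refine tsum_congr fun k => ?_
        simp only [Equiv.coe_addRight, S_apply, add_sub_cancel_right]
    _ = ∑' k : ℤ, ⟪u k, (S (-m) v) k⟫_ℂ := by
        refine tsum_congr fun k => ?_
        rw [S_apply, sub_neg_eq_add]

lemma symm (hα : 0 < α) (ha : ∀ k, ‖a k‖ ≤ A₁ * Real.exp (-α * |(k:ℝ)|))
    (hsa : ∀ k, a (-k) = starRingEnd ℂ (a k))
    {Vb : ℝ} (V : ℤ → ℝ) (hV : ∀ n, ‖((V n : ℝ) : ℂ)‖ ≤ Vb)
    (H : L2 →L[ℂ] L2)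
    (hH : ∀ (u : L2) (n : ℤ), (H u) n = (∑' k : ℤ, a (n - k) * u k) + (V n : ℂ) * u n)
    (u v : L2) : ⟪H u, v⟫_ℂ = ⟪u, H v⟫_ℂ := by
  set Mv := wshift (fun n => (V n : ℂ)) 0 Vb hV with hMv
  have hMvsymm : ⟪Mv u, v⟫_ℂ = ⟪u, Mv v⟫_ℂ := by
    rw [lp.inner_eq_tsum, lp.inner_eq_tsum]
    refine tsum_congr fun n => ?_
    simp only [hMv, wshift_apply, sub_zero, RCLike.inner_apply, map_mul,
      Complex.conj_ofReal]
    ring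
  rw [rep hα ha V hV H hH u, rep hα ha V hV H hH v,
    inner_add_left, inner_add_right, hMvsymm]
  congr 1
  have hswapl : ⟪∑' m : ℤ, a m • S m u, v⟫_ℂ = ∑' m : ℤ, ⟪a m • S m u, v⟫_ℂ := by
    have h1 : ⟪v, ∑' m : ℤ, a m • S m u⟫_ℂ = ∑' m : ℤ, ⟪v, a m • S m u⟫_ℂ :=
      (innerSL ℂ v).map_tsum (summable_aS hα ha u)
    have h2 := congrArg (starRingEnd ℂ) h1
    rw [inner_conj_symm, starRingEnd_apply, tsum_star] at h2
    rw [h2]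
    refine tsum_congr fun m => ?_
    rw [← starRingEnd_apply, inner_conj_symm]
  have h3 := (innerSL ℂ u).map_tsum (summable_aS hα ha v)
  simp only [innerSL_apply_apply] at h3
  rw [hswapl, h3]
  calc ∑' m : ℤ, ⟪a m • S m u, v⟫_ℂ
      = ∑' m : ℤ, ⟪u, a (-m) • S (-m) v⟫_ℂ := by
        refine tsum_congr fun m => ?_
        rw [inner_smul_left, inner_smul_right, inner_S, hsa]
    _ = ∑' m : ℤ, ⟪u, a m • S m v⟫_ℂ := by
        rw [← (Equiv.neg ℤ).tsum_eq (fun m : ℤ => ⟪u, a m • S m v⟫_ℂ)]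
        exact tsum_congr fun m => rfl

end CT6

namespace CT6

lemma inv_norm_le (H : L2 →L[ℂ] L2) (hsa : IsSelfAdjoint H) (z : ℂ)
    (hz : ∀ w ∈ spectrum ℂ H, 1 ≤ ‖z - w‖) (T : (L2 →L[ℂ] L2)ˣ)
    (hT : (T : L2 →L[ℂ] L2) = H - z • 1) :
    ‖((T⁻¹ : (L2 →L[ℂ] L2)ˣ) : L2 →L[ℂ] L2)‖ ≤ 1 := by
  have hstar : star (T : L2 →L[ℂ] L2) = H - (starRingEnd ℂ z) • 1 := by
    rw [hT, star_sub, hsa.star_eq, star_smul, star_one]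
    rfl
  have hcomm : Commute (T : L2 →L[ℂ] L2) (star (T : L2 →L[ℂ] L2)) := by
    rw [hstar, hT]
    refine Commute.sub_right (Commute.sub_left (Commute.refl H) ?_) ?_
    · exact ((Commute.one_left H).smul_left z)
    · refine Commute.sub_left ?_ ?_
      · exact ((Commute.one_right H).smul_right _)
      · exact (((Commute.refl (1 : L2 →L[ℂ] L2)).smul_left z).smul_right _)
  haveI hnormal : IsStarNormal ((T⁻¹ : (L2 →L[ℂ] L2)ˣ) : L2 →L[ℂ] L2) := by
    constructor
    have h1 : Commute ((T : L2 →L[ℂ] L2)) ((star T : (L2 →L[ℂ] L2)ˣ) : L2 →L[ℂ] L2) := hcomm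
    have h2 := (h1.units_inv_left.units_inv_right).symm
    rwa [Units.coe_star_inv] at h2
  have hrad := IsStarNormal.spectralRadius_eq_nnnorm ((T⁻¹ : (L2 →L[ℂ] L2)ˣ) : L2 →L[ℂ] L2)
  have hle : spectralRadius ℂ ((T⁻¹ : (L2 →L[ℂ] L2)ˣ) : L2 →L[ℂ] L2) ≤ 1 := by
    refine iSup₂_le fun μ hμ => ?_
    have hμ0 : μ ≠ 0 := by
      intro h; rw [h] at hμ
      exact Units.zero_notMem_spectrum (R := ℂ) T⁻¹ hμ
    have hinv : μ⁻¹ ∈ spectrum ℂ ((T : L2 →L[ℂ] L2)) := by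
      have := (spectrum.inv_mem_iff (R := ℂ) (r := Units.mk0 μ hμ0) (a := T⁻¹)).1 (by simpa using hμ)
      simpa using this
    rw [hT, ← Algebra.algebraMap_eq_smul_one, ← spectrum.sub_singleton_eq] at hinv
    obtain ⟨w, hw, y, hy, hwy⟩ := Set.mem_sub.1 hinv
    rw [Set.mem_singleton_iff] at hy
    subst hy
    have h1 : (1:ℝ) ≤ ‖μ⁻¹‖ := by
      rw [← hwy, ← norm_sub_rev]
      exact hz w hw
    rw [norm_inv] at h1
    have hpos : 0 < ‖μ‖ := norm_pos_iff.2 hμ0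
    have : ‖μ‖ ≤ 1 := by
      rw [le_inv_comm₀ (by norm_num) hpos] at h1
      simpa using h1
    have h2 : ‖μ‖₊ ≤ 1 := by exact_mod_cast this
    exact_mod_cast h2
  rw [hrad] at hle
  have h3 : ‖((T⁻¹ : (L2 →L[ℂ] L2)ˣ) : L2 →L[ℂ] L2)‖₊ ≤ 1 := by
    exact_mod_cast hle
  exact_mod_cast h3

end CT6

namespace CT6

lemma abs_exp_sub_one (t : ℝ) : |Real.exp t - 1| ≤ Real.exp |t| - 1 := by
  rcases le_or_gt 0 t with h | h
  · rw [abs_of_nonneg h, abs_of_nonneg (by linarith [Real.one_le_exp h])]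
  · rw [abs_of_neg h, abs_of_nonpos (by linarith [Real.exp_lt_one_iff.2 h])]
    have h1 := Real.add_one_le_exp t
    have h2 := Real.add_one_le_exp (-t)
    linarith

lemma exp_sub_one_le (x : ℝ) (hx : 0 ≤ x) : Real.exp x - 1 ≤ x * Real.exp x := by
  have h1 := Real.add_one_le_exp (-x)
  have h2 := Real.exp_pos x
  have h3 : Real.exp (-x) * Real.exp x = 1 := by
    rw [← Real.exp_add]; simp
  nlinarith

end CT6

/-- Combes–Thomas estimate for long-range operators:
for `H = A + V` with `(Au)_n = Σ_k a_{n-k} u_k`, `|a_k| ≤ A₁ e^{-α|k|}`,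
`a_{-k} = conj(a_k)`, `V` real bounded, and `z` at distance `≥ 1` from the
spectrum of `H`, there are `C, c > 0` depending only on `A₁, α, ‖V‖_∞` with
`|((H-z)⁻¹ δ_j, δ_n)| ≤ C e^{-c|n-j|}` for all `j, n`. -/
theorem stmt6 (A₁ α Vbd : ℝ) (hA₁ : 0 < A₁) (hα : 0 < α) (hVbd : 0 ≤ Vbd) :
    ∃ C c : ℝ, 0 < C ∧ 0 < c ∧
      ∀ (a : ℤ → ℂ) (V : ℤ → ℝ) (H : L2 →L[ℂ] L2) (z : ℂ),
        (∀ k : ℤ, ‖a k‖ ≤ A₁ * Real.exp (-α * |(k : ℝ)|)) →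
        (∀ k : ℤ, a (-k) = starRingEnd ℂ (a k)) →
        (∀ n : ℤ, |V n| ≤ Vbd) →
        (∀ (u : L2) (n : ℤ), (H u) n = (∑' k : ℤ, a (n - k) * u k) + (V n : ℂ) * u n) →
        (∀ w ∈ spectrum ℂ H, 1 ≤ ‖z - w‖) →
        ∀ j n : ℤ,
          ‖⟪(Ring.inverse (H - z • 1)) (dl j), dl n⟫_ℂ‖ ≤
            C * Real.exp (-c * |(n : ℝ) - (j : ℝ)|) := by
  classical
  set S2 : ℝ := ∑' m : ℤ, |(m:ℝ)| * Real.exp (-(α/2) * |(m:ℝ)|) with hS2def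
  have hS2sum : Summable (fun m : ℤ => |(m:ℝ)| * Real.exp (-(α/2) * |(m:ℝ)|)) :=
    CT6.summable_mul_exp_int (by linarith)
  have hS2nonneg : 0 ≤ S2 := tsum_nonneg (fun m => by positivity)
  set c : ℝ := min (α/2) (1/(2*A₁*S2 + 2)) with hcdef
  have hc0 : 0 < c := lt_min (by linarith) (by positivity)
  have hcα : c ≤ α/2 := min_le_left _ _
  have hcS2 : c * (A₁ * S2) ≤ 1/2 := by
    have h1 : c ≤ 1/(2*A₁*S2 + 2) := min_le_right _ _
    have h2 : 0 < 2*A₁*S2 + 2 := by positivity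
    have h3 : c * (A₁ * S2) ≤ (1/(2*A₁*S2 + 2)) * (A₁ * S2) :=
      mul_le_mul_of_nonneg_right h1 (by positivity)
    have h4 : (1/(2*A₁*S2 + 2)) * (A₁ * S2) ≤ 1/2 := by
      rw [div_mul_eq_mul_div, div_le_div_iff₀ h2 (by norm_num)]
      nlinarith
    linarith
  refine ⟨2, c, by norm_num, hc0, ?_⟩
  intro a V H z ha0 hsa hV0 hH hz0 j n
  have ha : ∀ k : ℤ, ‖a k‖ ≤ A₁ * Real.exp (-α * |(k:ℝ)|) := by
    intro k; exact ha0 k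
  have hV : ∀ k : ℤ, ‖((V k : ℝ) : ℂ)‖ ≤ Vbd := by
    intro k; rw [Complex.norm_real, Real.norm_eq_abs]; exact hV0 k
  have hz : ∀ w ∈ spectrum ℂ H, 1 ≤ ‖z - w‖ := by
    intro w hw; exact hz0 w hw
  have hselfadj : IsSelfAdjoint H := by
    rw [ContinuousLinearMap.isSelfAdjoint_iff_isSymmetric]
    exact fun u v => CT6.symm hα ha hsa V hV H hH u v
  -- the resolvent as a unit
  have hzs : z ∉ spectrum ℂ H := fun h => by
    have := hz z h
    simp only [sub_self, norm_zero] at this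
    linarith
  have hunit : IsUnit (H - z • 1) := by
    have h1 := spectrum.notMem_iff.1 hzs
    have h2 := h1.neg
    rwa [neg_sub, Algebra.algebraMap_eq_smul_one] at h2
  set T := hunit.unit with hTdef
  have hTval : (T : L2 →L[ℂ] L2) = H - z • 1 := hunit.unit_spec
  have hRinv : Ring.inverse (H - z • 1) = ((T⁻¹ : (L2 →L[ℂ] L2)ˣ) : L2 →L[ℂ] L2) := by
    rw [← hTval, Ring.inverse_unit]
  have hRnorm : ‖((T⁻¹ : (L2 →L[ℂ] L2)ˣ) : L2 →L[ℂ] L2)‖ ≤ 1 :=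
    CT6.inv_norm_le H hselfadj z hz T hTval
  -- the weight
  set D : ℝ := |(n : ℝ) - (j : ℝ)| with hDdef
  have hD0 : 0 ≤ D := abs_nonneg _
  set φ : ℤ → ℝ := fun k => min |(k:ℝ) - (j:ℝ)| D with hφdef
  have hφ0 : ∀ k, 0 ≤ φ k := fun k => le_min (abs_nonneg _) hD0
  have hφD : ∀ k, φ k ≤ D := fun k => min_le_right _ _
  have hφj : φ j = 0 := by simp [hφdef, hD0]
  have hφn : φ n = D := by simp [hφdef, hDdef]
  have hφlip : ∀ k m : ℤ, |φ k - φ (k - m)| ≤ |(m:ℝ)| := by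
    intro k m
    have h1 : |φ k - φ (k - m)| ≤ max |(|(k:ℝ) - (j:ℝ)|) - (|((k - m : ℤ):ℝ) - (j:ℝ)|)| |D - D| :=
      abs_min_sub_min_le_max _ _ _ _
    rw [sub_self, abs_zero, max_eq_left (abs_nonneg _)] at h1
    refine h1.trans ?_
    have h2 := abs_abs_sub_abs_le_abs_sub ((k:ℝ) - (j:ℝ)) (((k - m : ℤ):ℝ) - (j:ℝ))
    refine h2.trans (le_of_eq ?_)
    push_cast
    congr 1
    ring
  set g : ℤ → ℝ := fun k => Real.exp (c * φ k) with hgdef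
  have hg1 : ∀ k, 1 ≤ g k := fun k => Real.one_le_exp (by positivity)
  have hgpos : ∀ k, 0 < g k := fun k => Real.exp_pos _
  have hgD : ∀ k, g k ≤ Real.exp (c * D) :=
    fun k => Real.exp_le_exp.2 (mul_le_mul_of_nonneg_left (hφD k) hc0.le)
  have hWb : ∀ k, ‖((g k : ℝ) : ℂ)‖ ≤ Real.exp (c * D) := by
    intro k
    rw [Complex.norm_real, Real.norm_eq_abs, abs_of_pos (hgpos k)]
    exact hgD k
  have hW'b : ∀ k, ‖(((g k)⁻¹ : ℝ) : ℂ)‖ ≤ 1 := by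
    intro k
    rw [Complex.norm_real, Real.norm_eq_abs, abs_of_pos (inv_pos.2 (hgpos k))]
    exact inv_le_one_of_one_le₀ (hg1 k)
  set W : L2 →L[ℂ] L2 := CT6.wshift (fun k => ((g k : ℝ) : ℂ)) 0 (Real.exp (c * D)) hWb with hWdef
  set W' : L2 →L[ℂ] L2 := CT6.wshift (fun k => (((g k)⁻¹ : ℝ) : ℂ)) 0 1 hW'b with hW'def
  have hWapp : ∀ (u : L2) (k : ℤ), (W u) k = ((g k : ℝ) : ℂ) * u k := by
    intro u k
    rw [hWdef, CT6.wshift_apply, sub_zero]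
  have hW'app : ∀ (u : L2) (k : ℤ), (W' u) k = (((g k)⁻¹ : ℝ) : ℂ) * u k := by
    intro u k
    rw [hW'def, CT6.wshift_apply, sub_zero]
  have hWW' : W * W' = 1 := by
    ext u k
    show ((W * W') u) k = (1 : L2 →L[ℂ] L2) u k
    rw [ContinuousLinearMap.mul_apply, hWapp, hW'app, ContinuousLinearMap.one_apply,
      ← mul_assoc, ← Complex.ofReal_mul, mul_inv_cancel₀ (hgpos k).ne', Complex.ofReal_one,
      one_mul]
  have hW'W : W' * W = 1 := by
    ext u k
    show ((W' * W) u) k = (1 : L2 →L[ℂ] L2) u k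
    rw [ContinuousLinearMap.mul_apply, hW'app, hWapp, ContinuousLinearMap.one_apply,
      ← mul_assoc, ← Complex.ofReal_mul, inv_mul_cancel₀ (hgpos k).ne', Complex.ofReal_one,
      one_mul]
  set Mv : L2 →L[ℂ] L2 := CT6.wshift (fun k => ((V k : ℝ) : ℂ)) 0 Vbd hV with hMvdef
  have hrep : ∀ u : L2, H u = (∑' m : ℤ, a m • CT6.S m u) + Mv u :=
    fun u => CT6.rep hα ha V hV H hH u
  have hWnorm : ∀ x : L2, ‖W x‖ ≤ Real.exp (c * D) * ‖x‖ := fun x =>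
    le_trans (W.le_opNorm x)
      (mul_le_mul_of_nonneg_right (CT6.wshift_norm_le _ _ _ _) (norm_nonneg _))
  have hW'norm : ∀ x : L2, ‖W' x‖ ≤ ‖x‖ := fun x => by
    have := le_trans (W'.le_opNorm x)
      (mul_le_mul_of_nonneg_right (CT6.wshift_norm_le _ _ _ _) (norm_nonneg _))
    simpa using this
  -- the conjugation error operator
  set B : L2 →L[ℂ] L2 := W * H * W' - H with hBdef
  set em : ℤ → ℝ := fun m => Real.exp (c * |(m:ℝ)|) - 1 with hemdef
  have hem0 : ∀ m, 0 ≤ em m := fun m => by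
    have := Real.one_le_exp (show (0:ℝ) ≤ c * |(m:ℝ)| by positivity)
    simp only [hemdef]; linarith
  have hdm : ∀ m nn : ℤ, ‖((g nn * (g (nn - m))⁻¹ - 1 : ℝ) : ℂ)‖ ≤ em m := by
    intro m nn
    rw [Complex.norm_real, Real.norm_eq_abs]
    have h1 : g nn * (g (nn - m))⁻¹ = Real.exp (c * φ nn - c * φ (nn - m)) := by
      rw [hgdef, Real.exp_sub]
      simp [div_eq_mul_inv]
    rw [h1]
    refine le_trans (CT6.abs_exp_sub_one _) ?_
    simp only [hemdef]
    have h2 : |c * φ nn - c * φ (nn - m)| ≤ c * |(m:ℝ)| := by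
      rw [← mul_sub, abs_mul, abs_of_pos hc0]
      exact mul_le_mul_of_nonneg_left (hφlip nn m) hc0.le
    have := Real.exp_le_exp.2 h2
    linarith
  set Fm : ℤ → (L2 →L[ℂ] L2) := fun m =>
    CT6.wshift (fun nn => ((g nn * (g (nn - m))⁻¹ - 1 : ℝ) : ℂ)) m (em m) (hdm m) with hFmdef
  have hFmnorm : ∀ (m : ℤ) (x : L2), ‖Fm m x‖ ≤ em m * ‖x‖ := fun m x =>
    le_trans ((Fm m).le_opNorm x)
      (mul_le_mul_of_nonneg_right (CT6.wshift_norm_le _ _ _ _) (norm_nonneg _))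
  have hkey : ∀ m : ℤ, ‖a m‖ * em m ≤
      (c * A₁) * (|(m:ℝ)| * Real.exp (-(α/2) * |(m:ℝ)|)) := by
    intro m
    have he1 : em m ≤ (c * |(m:ℝ)|) * Real.exp (c * |(m:ℝ)|) :=
      CT6.exp_sub_one_le _ (by positivity)
    have h3 : ‖a m‖ * em m ≤
        (A₁ * Real.exp (-α * |(m:ℝ)|)) * ((c * |(m:ℝ)|) * Real.exp (c * |(m:ℝ)|)) :=
      mul_le_mul (ha m) he1 (hem0 m) (le_trans (norm_nonneg _) (ha m))
    refine h3.trans ?_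
    have h4 : Real.exp (-α * |(m:ℝ)|) * Real.exp (c * |(m:ℝ)|) ≤
        Real.exp (-(α/2) * |(m:ℝ)|) := by
      rw [← Real.exp_add]
      apply Real.exp_le_exp.2
      have : (-α + c) * |(m:ℝ)| ≤ (-(α/2)) * |(m:ℝ)| :=
        mul_le_mul_of_nonneg_right (by linarith) (abs_nonneg _)
      linarith [this]
    calc (A₁ * Real.exp (-α * |(m:ℝ)|)) * ((c * |(m:ℝ)|) * Real.exp (c * |(m:ℝ)|))
        = (c * A₁ * |(m:ℝ)|) * (Real.exp (-α * |(m:ℝ)|) * Real.exp (c * |(m:ℝ)|)) := by ring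
      _ ≤ (c * A₁ * |(m:ℝ)|) * Real.exp (-(α/2) * |(m:ℝ)|) := by
          apply mul_le_mul_of_nonneg_left h4 (by positivity)
      _ = (c * A₁) * (|(m:ℝ)| * Real.exp (-(α/2) * |(m:ℝ)|)) := by ring
  have hsmFm : ∀ u : L2, Summable (fun m : ℤ => a m • Fm m u) := by
    intro u
    refine Summable.of_norm_bounded
      (g := fun m => (c * A₁ * ‖u‖) * (|(m:ℝ)| * Real.exp (-(α/2) * |(m:ℝ)|)))
      (hS2sum.mul_left _) (fun m => ?_)
    rw [norm_smul]
    calc ‖a m‖ * ‖Fm m u‖ ≤ ‖a m‖ * (em m * ‖u‖) :=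
          mul_le_mul_of_nonneg_left (hFmnorm m u) (norm_nonneg _)
      _ = (‖a m‖ * em m) * ‖u‖ := by ring
      _ ≤ ((c * A₁) * (|(m:ℝ)| * Real.exp (-(α/2) * |(m:ℝ)|))) * ‖u‖ :=
          mul_le_mul_of_nonneg_right (hkey m) (norm_nonneg _)
      _ = (c * A₁ * ‖u‖) * (|(m:ℝ)| * Real.exp (-(α/2) * |(m:ℝ)|)) := by ring
  have hBu : ∀ u : L2, B u = ∑' m : ℤ, a m • Fm m u := by
    intro u
    have hsm1 : Summable (fun m : ℤ => a m • CT6.S m (W' u)) := CT6.summable_aS hα ha (W' u)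
    have hWMv : W (Mv (W' u)) = Mv u := by
      apply lp.ext
      funext k
      rw [hWapp, hMvdef, CT6.wshift_apply, sub_zero, hW'app, CT6.wshift_apply, sub_zero]
      have hb : ((g k : ℝ) : ℂ) * (((g k)⁻¹ : ℝ) : ℂ) = 1 := by
        rw [← Complex.ofReal_mul, mul_inv_cancel₀ (hgpos k).ne', Complex.ofReal_one]
      linear_combination (((V k : ℝ) : ℂ) * u k) * hb
    have hterm : ∀ m : ℤ, a m • W (CT6.S m (W' u)) - a m • CT6.S m u = a m • Fm m u := by
      intro m
      apply lp.ext
      funext nn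
      rw [lp.coeFn_sub, Pi.sub_apply, lp.coeFn_smul, lp.coeFn_smul, lp.coeFn_smul,
        Pi.smul_apply, Pi.smul_apply, Pi.smul_apply, smul_eq_mul, smul_eq_mul, smul_eq_mul,
        hWapp, CT6.S_apply, hW'app, CT6.S_apply, hFmdef, CT6.wshift_apply]
      push_cast
      ring
    have hB1 : B u = W (H (W' u)) - H u := by
      rw [hBdef]
      rw [ContinuousLinearMap.sub_apply, ContinuousLinearMap.mul_apply,
        ContinuousLinearMap.mul_apply]
    rw [hB1, hrep (W' u), hrep u, map_add, W.map_tsum hsm1]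
    have hsm2' : Summable (fun m : ℤ => a m • W (CT6.S m (W' u))) := by
      refine Summable.of_norm_bounded
        (g := fun m => A₁ * Real.exp (-α * |(m:ℝ)|) * (Real.exp (c * D) * ‖u‖))
        (((CT6.summable_exp_int hα).mul_left A₁).mul_right _) (fun m => ?_)
      rw [norm_smul]
      have h5 : ‖W (CT6.S m (W' u))‖ ≤ Real.exp (c * D) * ‖u‖ :=
        le_trans (hWnorm _) (mul_le_mul_of_nonneg_left
          (le_trans (CT6.S_norm_le m _) (hW'norm u)) (Real.exp_pos _).le)
      exact mul_le_mul (ha m) h5 (norm_nonneg _) (le_trans (norm_nonneg _) (ha m))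
    calc (∑' m : ℤ, W (a m • CT6.S m (W' u))) + W (Mv (W' u))
          - ((∑' m : ℤ, a m • CT6.S m u) + Mv u)
        = (∑' m : ℤ, a m • W (CT6.S m (W' u))) - (∑' m : ℤ, a m • CT6.S m u) := by
          rw [hWMv, tsum_congr (fun m : ℤ => W.map_smul (a m) (CT6.S m (W' u)))]
          abel
      _ = ∑' m : ℤ, (a m • W (CT6.S m (W' u)) - a m • CT6.S m u) :=
          (Summable.tsum_sub hsm2' (CT6.summable_aS hα ha u)).symm
      _ = ∑' m : ℤ, a m • Fm m u := tsum_congr hterm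
  have hBnorm : ‖B‖ ≤ 1/2 := by
    refine B.opNorm_le_bound (by norm_num) (fun u => ?_)
    rw [hBu u]
    have hb2 : ∀ m : ℤ, ‖a m • Fm m u‖ ≤
        (c * A₁ * ‖u‖) * (|(m:ℝ)| * Real.exp (-(α/2) * |(m:ℝ)|)) := by
      intro m
      rw [norm_smul]
      calc ‖a m‖ * ‖Fm m u‖ ≤ (‖a m‖ * em m) * ‖u‖ := by
            rw [mul_assoc]
            exact mul_le_mul_of_nonneg_left (hFmnorm m u) (norm_nonneg _)
        _ ≤ ((c * A₁) * (|(m:ℝ)| * Real.exp (-(α/2) * |(m:ℝ)|))) * ‖u‖ :=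
            mul_le_mul_of_nonneg_right (hkey m) (norm_nonneg _)
        _ = (c * A₁ * ‖u‖) * (|(m:ℝ)| * Real.exp (-(α/2) * |(m:ℝ)|)) := by ring
    have hnormsum : Summable (fun m : ℤ => ‖a m • Fm m u‖) :=
      Summable.of_nonneg_of_le (fun m => norm_nonneg _) hb2 (hS2sum.mul_left _)
    refine le_trans (norm_tsum_le_tsum_norm hnormsum) ?_
    refine le_trans (Summable.tsum_le_tsum hb2 hnormsum (hS2sum.mul_left _)) ?_
    rw [tsum_mul_left, ← hS2def]
    have : c * A₁ * ‖u‖ * S2 = (c * (A₁ * S2)) * ‖u‖ := by ring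
    rw [this]
    exact mul_le_mul_of_nonneg_right hcS2 (norm_nonneg _)
  -- invert (H - z) + B via Neumann series
  haveI : Nontrivial L2 := by
    refine ⟨dl 0, 0, fun h => ?_⟩
    have h1 : (dl 0) (0:ℤ) = (0 : L2) (0:ℤ) := by rw [h]
    rw [lp.coeFn_zero] at h1
    simp only [dl, lp.single_apply_self] at h1
    exact one_ne_zero h1
  set R : L2 →L[ℂ] L2 := ((T⁻¹ : (L2 →L[ℂ] L2)ˣ) : L2 →L[ℂ] L2) with hRdef
  have hRBhalf : ‖-(R * B)‖ ≤ 1/2 := by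
    rw [norm_neg]
    calc ‖R * B‖ ≤ ‖R‖ * ‖B‖ := norm_mul_le _ _
      _ ≤ 1 * (1/2) := mul_le_mul hRnorm hBnorm (norm_nonneg _) zero_le_one
      _ = 1/2 := by norm_num
  have hRB : ‖-(R * B)‖ < 1 := lt_of_le_of_lt hRBhalf (by norm_num)
  set U : (L2 →L[ℂ] L2)ˣ := Units.oneSub (-(R * B)) hRB with hUdef
  have hUval : (U : L2 →L[ℂ] L2) = 1 + R * B := by
    rw [hUdef]
    show 1 - -(R * B) = 1 + R * B
    rw [sub_neg_eq_add]
  have hRT : R * (T : L2 →L[ℂ] L2) = 1 := T.inv_mul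
  have hTR : (T : L2 →L[ℂ] L2) * R = 1 := T.mul_inv
  have hTU : (T : L2 →L[ℂ] L2) * (U : L2 →L[ℂ] L2) = W * (T : L2 →L[ℂ] L2) * W' := by
    rw [hUval]
    have h1 : (T : L2 →L[ℂ] L2) * (1 + R * B) = (T : L2 →L[ℂ] L2) + B := by
      rw [mul_add, mul_one, ← mul_assoc, hTR, one_mul]
    have h3 : W * H * W' = B + H := by rw [hBdef]; abel
    have hzW : W * (z • (1 : L2 →L[ℂ] L2)) * W' = z • (1 : L2 →L[ℂ] L2) := by
      rw [mul_smul_comm, mul_one, smul_mul_assoc, hWW']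
    have h2 : W * (T : L2 →L[ℂ] L2) * W' = (T : L2 →L[ℂ] L2) + B := by
      rw [hTval, mul_sub, sub_mul, hzW, h3]
      abel
    rw [h1, h2]
  have hY1 : (W * R * W') * (W * (T : L2 →L[ℂ] L2) * W') = 1 := by
    calc (W * R * W') * (W * (T : L2 →L[ℂ] L2) * W')
        = W * (R * ((W' * W) * ((T : L2 →L[ℂ] L2) * W'))) := by
          simp only [mul_assoc]
      _ = W * (R * ((T : L2 →L[ℂ] L2) * W')) := by rw [hW'W, one_mul]
      _ = W * ((R * (T : L2 →L[ℂ] L2)) * W') := by rw [mul_assoc]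
      _ = W * W' := by rw [hRT, one_mul]
      _ = 1 := hWW'
  have hYinv : W * R * W' = (((T * U)⁻¹ : (L2 →L[ℂ] L2)ˣ) : L2 →L[ℂ] L2) := by
    have h6 : (W * R * W') * (((T * U : (L2 →L[ℂ] L2)ˣ)) : L2 →L[ℂ] L2) = 1 := by
      rw [Units.val_mul, hTU]
      exact hY1
    exact (Units.inv_eq_of_mul_eq_one_left h6).symm
  have hUinv_norm : ‖((U⁻¹ : (L2 →L[ℂ] L2)ˣ) : L2 →L[ℂ] L2)‖ ≤ 2 := by
    have h7 := tsum_geometric_le_of_norm_lt_one (-(R * B)) hRB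
    have h8 : ((U⁻¹ : (L2 →L[ℂ] L2)ˣ) : L2 →L[ℂ] L2) = ∑' m : ℕ, (-(R * B)) ^ m := rfl
    have hone : ‖(1 : L2 →L[ℂ] L2)‖ = 1 := norm_one
    have h9 : (1:ℝ)/2 ≤ 1 - ‖-(R * B)‖ := by linarith
    have h10 : (1 - ‖-(R * B)‖)⁻¹ ≤ ((1:ℝ)/2)⁻¹ :=
      inv_anti₀ (by norm_num) h9
    rw [h8]
    rw [hone] at h7
    have : ((1:ℝ)/2)⁻¹ = 2 := by norm_num
    linarith [h7, h10]
  have hYnorm : ‖W * R * W'‖ ≤ 2 := by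
    rw [hYinv, mul_inv_rev, Units.val_mul]
    calc ‖((U⁻¹ : (L2 →L[ℂ] L2)ˣ) : L2 →L[ℂ] L2) * ((T⁻¹ : (L2 →L[ℂ] L2)ˣ) : L2 →L[ℂ] L2)‖
        ≤ ‖((U⁻¹ : (L2 →L[ℂ] L2)ˣ) : L2 →L[ℂ] L2)‖ * ‖((T⁻¹ : (L2 →L[ℂ] L2)ˣ) : L2 →L[ℂ] L2)‖ :=
          norm_mul_le _ _
      _ ≤ 2 * 1 := mul_le_mul hUinv_norm hRnorm (norm_nonneg _) (by norm_num)
      _ = 2 := by norm_num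
  -- endgame
  have hdlj : W' (dl j) = dl j := by
    apply lp.ext
    funext k
    rw [hW'app]
    simp only [dl]
    rcases eq_or_ne k j with rfl | hk
    · rw [lp.single_apply_self]
      have hgk : g k = 1 := by rw [hgdef]; simp [hφj]
      rw [hgk]
      norm_num
    · rw [lp.single_apply_ne 2 j _ hk, mul_zero]
  have hcomp : W' * (W * R * W') = R * W' := by
    calc W' * (W * R * W') = ((W' * W) * R) * W' := by simp only [mul_assoc]
      _ = R * W' := by rw [hW'W, one_mul]
  have hfinal1 : R (dl j) = W' ((W * R * W') (dl j)) := by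
    calc R (dl j) = R (W' (dl j)) := by rw [hdlj]
      _ = (R * W') (dl j) := rfl
      _ = (W' * (W * R * W')) (dl j) := by rw [hcomp]
      _ = W' ((W * R * W') (dl j)) := rfl
  have hdlnorm : ‖dl j‖ = 1 := by
    have h11 := lp.norm_single (p := 2) (E := fun _ : ℤ => ℂ) (by norm_num) j (1:ℂ)
    simpa [dl] using h11
  have hynorm : ‖(W * R * W') (dl j)‖ ≤ 2 := by
    calc ‖(W * R * W') (dl j)‖ ≤ ‖W * R * W'‖ * ‖dl j‖ := (W * R * W').le_opNorm _
      _ ≤ 2 * 1 := mul_le_mul hYnorm (le_of_eq hdlnorm) (norm_nonneg _) (by norm_num)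
      _ = 2 := by norm_num
  have hInner : ⟪(Ring.inverse (H - z • 1) : L2 →L[ℂ] L2) (dl j), dl n⟫_ℂ
      = starRingEnd ℂ ((R (dl j)) n) := by
    rw [hRinv]
    show ⟪R (dl j), lp.single 2 n (1:ℂ)⟫_ℂ = _
    rw [lp.inner_single_right, RCLike.inner_apply, one_mul]
  rw [hInner, RCLike.norm_conj, hfinal1]
  have h12 : (W' ((W * R * W') (dl j))) n = (((g n)⁻¹ : ℝ) : ℂ) * ((W * R * W') (dl j)) n :=
    hW'app _ n
  rw [h12]
  have hgn : (g n)⁻¹ = Real.exp (-(c * D)) := by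
    rw [hgdef]
    simp only [hφn]
    rw [← Real.exp_neg]
  calc ‖(((g n)⁻¹ : ℝ) : ℂ) * ((W * R * W') (dl j)) n‖
      = (g n)⁻¹ * ‖((W * R * W') (dl j)) n‖ := by
        rw [norm_mul, Complex.norm_real, Real.norm_eq_abs,
          abs_of_pos (inv_pos.2 (hgpos n))]
    _ ≤ (g n)⁻¹ * ‖(W * R * W') (dl j)‖ := by
        apply mul_le_mul_of_nonneg_left _ (inv_pos.2 (hgpos n)).le
        exact lp.norm_apply_le_norm (by norm_num) _ n
    _ ≤ (g n)⁻¹ * 2 := mul_le_mul_of_nonneg_left hynorm (inv_pos.2 (hgpos n)).le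
    _ = 2 * Real.exp (-c * D) := by rw [hgn, neg_mul]; ring
end
end

section
/- (Commutator structure) Let H₀ be the long-range free operator (H₀u)_n = Σ_k a_k u_{n-k} with |a_k| ≤ A₁e^{-a|k|}. For a sequence γ = {γ_k} with |γ_k| ≤ Ce^{-c|k|}, define (X^γ_{2p}u)_n = n^p Σ_k γ_k u_{n-k}. Then the commutator X̂^γ_{2p} = −i[H₀, X^γ_{2p}] can be written as Σ_{j=0}^{p-1} X^{γ^j}_{2j} for new sequences γ^j with |γ^j_k| ≤ C_j e^{-c_j|k|}, where explicitly (X̂^γ_{2p}u)_n = −i Σ_m (Σ_k (n^p − (n−k)^p) a_k γ_{m−k}) u_{n−m}. -/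
set_option maxHeartbeats 1000000
set_option maxHeartbeats 1000000
open Finset

lemma sum_pow_exp (q : ℕ) {δ : ℝ} (hδ : 0 < δ) :
    Summable (fun k : ℤ => |(k : ℝ)| ^ q * Real.exp (-δ * |(k : ℝ)|)) := by
  have hnat : Summable (fun n : ℕ => |((n : ℤ) : ℝ)| ^ q * Real.exp (-δ * |((n : ℤ) : ℝ)|)) := by
    have h := summable_pow_mul_geometric_of_norm_lt_one (R := ℝ) q
      (r := Real.exp (-δ)) (by
        rw [Real.norm_eq_abs, abs_of_pos (Real.exp_pos _)]
        rw [Real.exp_lt_one_iff]; linarith)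
    apply h.congr
    intro n
    push_cast
    rw [abs_of_nonneg (by positivity : (0:ℝ) ≤ (n:ℝ))]
    rw [← Real.exp_nat_mul]
    ring_nf
  apply Summable.of_nat_of_neg hnat
  apply hnat.congr
  intro n
  push_cast
  rw [abs_neg]

lemma binom_expand (p : ℕ) (x y : ℂ) :
    x ^ p - (x - y) ^ p
      = -∑ j ∈ Finset.range p, (p.choose j : ℂ) * x ^ j * (-y) ^ (p - j) := by
  have h : (x - y) ^ p = (x + (-y)) ^ p := by ring_nf
  rw [h, add_pow, Finset.sum_range_succ]
  simp only [Nat.sub_self, pow_zero, Nat.choose_self, Nat.cast_one, mul_one]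
  have h2 : ∑ j ∈ Finset.range p, x ^ j * (-y) ^ (p - j) * (p.choose j : ℂ)
      = ∑ j ∈ Finset.range p, (p.choose j : ℂ) * x ^ j * (-y) ^ (p - j) :=
    Finset.sum_congr rfl (fun j _ => by ring)
  rw [h2]
  ring



/-- commutator structure: for the long-range free operator with
hopping `a` (`|a_k| ≤ A₁ e^{-α|k|}`) and an exponentially decaying sequence
`γ`, the kernel of the commutator `X̂^γ_{2p} = -i[H₀, X^γ_{2p}]`, namely
`(n,m) ↦ -i Σ_k (n^p - (n-k)^p) a_k γ_{m-k}`, equals `Σ_{j=0}^{p-1} n^j γ^j_m`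
for new exponentially decaying sequences `γ^0, …, γ^{p-1}`; i.e.
`X̂^γ_{2p} = Σ_{j<p} X^{γ^j}_{2j}`. -/
theorem stmt10 (p : ℕ) (hp : 1 ≤ p) (a γ : ℤ → ℂ) (A₁ α C c : ℝ)
    (hA₁ : 0 < A₁) (hα : 0 < α) (hC : 0 < C) (hc : 0 < c)
    (ha : ∀ k : ℤ, ‖a k‖ ≤ A₁ * Real.exp (-α * |(k : ℝ)|))
    (hsym : ∀ k : ℤ, a (-k) = starRingEnd ℂ (a k))
    (hγ : ∀ k : ℤ, ‖γ k‖ ≤ C * Real.exp (-c * |(k : ℝ)|)) :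
    ∃ (γ' : ℕ → ℤ → ℂ) (C' c' : ℕ → ℝ),
      (∀ j < p, 0 < C' j ∧ 0 < c' j ∧
        ∀ k : ℤ, ‖γ' j k‖ ≤ C' j * Real.exp (-(c' j) * |(k : ℝ)|)) ∧
      ∀ n m : ℤ,
        (-Complex.I) * ∑' k : ℤ, ((n : ℂ) ^ p - ((n : ℂ) - (k : ℂ)) ^ p) * a k * γ (m - k)
          = ∑ j ∈ Finset.range p, (n : ℂ) ^ j * γ' j m := by
  set β : ℝ := min α c / 2 with hβdef
  have hβ : 0 < β := by positivity
  have hβα : β < α := by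
    have : min α c ≤ α := min_le_left _ _
    simp only [hβdef]; linarith
  have hβc : β ≤ c := by
    have : min α c ≤ c := min_le_right _ _
    simp only [hβdef]; linarith
  -- the majorant and its summability
  have hmaj : ∀ q : ℕ, Summable (fun k : ℤ => |(k : ℝ)| ^ q * Real.exp (-(α - β) * |(k : ℝ)|)) :=
    fun q => sum_pow_exp q (by linarith)
  -- pointwise bound on the summand
  have key : ∀ (q : ℕ) (m k : ℤ),
      ‖(-(k : ℂ)) ^ q * a k * γ (m - k)‖
        ≤ (A₁ * C * Real.exp (-β * |(m : ℝ)|)) * (|(k : ℝ)| ^ q * Real.exp (-(α - β) * |(k : ℝ)|)) := by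
    intro q m k
    rw [norm_mul, norm_mul, norm_pow, norm_neg]
    have h1 : ‖(k : ℂ)‖ = |(k : ℝ)| := by
      rw [← Complex.ofReal_intCast, Complex.norm_real, Real.norm_eq_abs]
    rw [h1]
    have h2 : Real.exp (-α * |(k : ℝ)|) * Real.exp (-c * |((m - k : ℤ) : ℝ)|)
        ≤ Real.exp (-β * |(m : ℝ)|) * Real.exp (-(α - β) * |(k : ℝ)|) := by
      rw [← Real.exp_add, ← Real.exp_add]
      apply Real.exp_le_exp.2
      have htri : |(m : ℝ)| ≤ |(k : ℝ)| + |((m - k : ℤ) : ℝ)| := by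
        push_cast
        have := abs_add_le ((k : ℝ)) ((m : ℝ) - (k : ℝ))
        simpa using this
      nlinarith [abs_nonneg ((m - k : ℤ) : ℝ), abs_nonneg ((k : ℝ)), abs_nonneg ((m : ℝ))]
    calc |(k : ℝ)| ^ q * ‖a k‖ * ‖γ (m - k)‖
        ≤ |(k : ℝ)| ^ q * (A₁ * Real.exp (-α * |(k : ℝ)|)) * (C * Real.exp (-c * |((m - k : ℤ) : ℝ)|)) := by
          apply mul_le_mul (mul_le_mul le_rfl (ha k) (norm_nonneg _) (by positivity))
            (hγ _) (norm_nonneg _) (by positivity)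
      _ ≤ (A₁ * C * Real.exp (-β * |(m : ℝ)|)) * (|(k : ℝ)| ^ q * Real.exp (-(α - β) * |(k : ℝ)|)) := by
          have := mul_le_mul_of_nonneg_left h2 (le_of_lt (mul_pos hA₁ hC))
          nlinarith [pow_nonneg (abs_nonneg ((k : ℝ))) q, Real.exp_pos (-α * |(k : ℝ)|),
            Real.exp_pos (-c * |((m - k : ℤ) : ℝ)|), Real.exp_pos (-β * |(m : ℝ)|),
            Real.exp_pos (-(α - β) * |(k : ℝ)|)]
  -- summability of the inner summand
  have hsummand : ∀ (q : ℕ) (m : ℤ), Summable (fun k : ℤ => (-(k : ℂ)) ^ q * a k * γ (m - k)) := by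
    intro q m
    apply Summable.of_norm_bounded (((hmaj q)).mul_left (A₁ * C * Real.exp (-β * |(m : ℝ)|)))
    intro k
    exact key q m k
  -- define γ'
  refine ⟨fun j m => Complex.I * (p.choose j : ℂ) * ∑' k : ℤ, (-(k : ℂ)) ^ (p - j) * a k * γ (m - k),
    fun j => (p.choose j : ℝ) * (A₁ * C) *
      (∑' k : ℤ, |(k : ℝ)| ^ (p - j) * Real.exp (-(α - β) * |(k : ℝ)|)) + 1,
    fun _ => β, ?_, ?_⟩
  · intro j hj
    have hS : 0 ≤ ∑' k : ℤ, |(k : ℝ)| ^ (p - j) * Real.exp (-(α - β) * |(k : ℝ)|) :=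
      tsum_nonneg (fun k => by positivity)
    have hchoose : 0 < (p.choose j : ℝ) := by
      have := Nat.choose_pos (le_of_lt hj)
      positivity
    refine ⟨by positivity, hβ, ?_⟩
    intro m
    rw [norm_mul, norm_mul, Complex.norm_I, one_mul]
    have habs : ‖(p.choose j : ℂ)‖ = (p.choose j : ℝ) := by
      rw [← Complex.ofReal_natCast, Complex.norm_real, Real.norm_eq_abs, abs_of_pos hchoose]
    rw [habs]
    have hb : ‖∑' k : ℤ, (-(k : ℂ)) ^ (p - j) * a k * γ (m - k)‖
        ≤ (A₁ * C * Real.exp (-β * |(m : ℝ)|)) *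
          (∑' k : ℤ, |(k : ℝ)| ^ (p - j) * Real.exp (-(α - β) * |(k : ℝ)|)) := by
      calc ‖∑' k : ℤ, (-(k : ℂ)) ^ (p - j) * a k * γ (m - k)‖
          ≤ ∑' k : ℤ, ‖(-(k : ℂ)) ^ (p - j) * a k * γ (m - k)‖ := by
            apply norm_tsum_le_tsum_norm
            show Summable fun k : ℤ => ‖(-(k : ℂ)) ^ (p - j) * a k * γ (m - k)‖
            apply Summable.of_nonneg_of_le (fun k => norm_nonneg _) (key (p - j) m)
            exact ((hmaj (p - j))).mul_left _
        _ ≤ ∑' k : ℤ, (A₁ * C * Real.exp (-β * |(m : ℝ)|)) *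
              (|(k : ℝ)| ^ (p - j) * Real.exp (-(α - β) * |(k : ℝ)|)) := by
            apply Summable.tsum_le_tsum (key (p - j) m)
            · apply Summable.of_nonneg_of_le (fun k => norm_nonneg _) (key (p - j) m)
              exact ((hmaj (p - j))).mul_left _
            · exact ((hmaj (p - j))).mul_left _
        _ = (A₁ * C * Real.exp (-β * |(m : ℝ)|)) *
              (∑' k : ℤ, |(k : ℝ)| ^ (p - j) * Real.exp (-(α - β) * |(k : ℝ)|)) := by
            rw [tsum_mul_left]
    have hexp1 : Real.exp (-β * |(m : ℝ)|) ≤ 1 := by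
      apply Real.exp_le_one_iff.2
      nlinarith [abs_nonneg ((m : ℝ))]
    have hexp0 : 0 < Real.exp (-β * |(m : ℝ)|) := Real.exp_pos _
    calc (p.choose j : ℝ) * ‖∑' k : ℤ, (-(k : ℂ)) ^ (p - j) * a k * γ (m - k)‖
        ≤ (p.choose j : ℝ) * ((A₁ * C * Real.exp (-β * |(m : ℝ)|)) *
            (∑' k : ℤ, |(k : ℝ)| ^ (p - j) * Real.exp (-(α - β) * |(k : ℝ)|))) :=
          mul_le_mul_of_nonneg_left hb (le_of_lt hchoose)
      _ ≤ ((p.choose j : ℝ) * (A₁ * C) *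
            (∑' k : ℤ, |(k : ℝ)| ^ (p - j) * Real.exp (-(α - β) * |(k : ℝ)|)) + 1) *
            Real.exp (-β * |(m : ℝ)|) := by nlinarith
  · intro n m
    -- expand the kernel
    have hexpand : ∀ k : ℤ,
        (-Complex.I) * (((n : ℂ) ^ p - ((n : ℂ) - (k : ℂ)) ^ p) * a k * γ (m - k))
          = ∑ j ∈ Finset.range p,
              (n : ℂ) ^ j * (Complex.I * (p.choose j : ℂ) * ((-(k : ℂ)) ^ (p - j) * a k * γ (m - k))) := by
      intro k
      rw [binom_expand p (n : ℂ) (k : ℂ)]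
      have hstep : (-Complex.I) * ((-∑ j ∈ Finset.range p, (p.choose j : ℂ) * (n : ℂ) ^ j * (-(k : ℂ)) ^ (p - j)) * a k * γ (m - k))
          = Complex.I * ((∑ j ∈ Finset.range p, (p.choose j : ℂ) * (n : ℂ) ^ j * (-(k : ℂ)) ^ (p - j)) * a k * γ (m - k)) := by
        ring
      rw [hstep, Finset.sum_mul, Finset.sum_mul, Finset.mul_sum]
      apply Finset.sum_congr rfl
      intro j _
      ring
    have hsum1 : ∀ j ∈ Finset.range p, Summable (fun k : ℤ =>
        (n : ℂ) ^ j * (Complex.I * (p.choose j : ℂ) * ((-(k : ℂ)) ^ (p - j) * a k * γ (m - k)))) := by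
      intro j _
      exact (((hsummand (p - j) m).mul_left _).mul_left _)
    calc (-Complex.I) * ∑' k : ℤ, ((n : ℂ) ^ p - ((n : ℂ) - (k : ℂ)) ^ p) * a k * γ (m - k)
        = ∑' k : ℤ, (-Complex.I) * (((n : ℂ) ^ p - ((n : ℂ) - (k : ℂ)) ^ p) * a k * γ (m - k)) := by
          rw [tsum_mul_left]
      _ = ∑' k : ℤ, ∑ j ∈ Finset.range p,
            (n : ℂ) ^ j * (Complex.I * (p.choose j : ℂ) * ((-(k : ℂ)) ^ (p - j) * a k * γ (m - k))) := by
          exact tsum_congr hexpand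
      _ = ∑ j ∈ Finset.range p, ∑' k : ℤ,
            (n : ℂ) ^ j * (Complex.I * (p.choose j : ℂ) * ((-(k : ℂ)) ^ (p - j) * a k * γ (m - k))) := by
          exact Summable.tsum_finsetSum hsum1
      _ = ∑ j ∈ Finset.range p,
            (n : ℂ) ^ j * (Complex.I * (p.choose j : ℂ) * ∑' k : ℤ, (-(k : ℂ)) ^ (p - j) * a k * γ (m - k)) := by
          apply Finset.sum_congr rfl
          intro j _
          rw [tsum_mul_left, tsum_mul_left]
end
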